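/- Let P be a set of n points in the plane with distinct x- and y-coordinates, and let D(P) be the graph on P where two points p, q are adjacent if and only if the closed axis-parallel rectangle with corners p and q contains no other point of P. Then D(P) has an independent set of size at least ⌈√n / 2⌉ (more precisely, Ω(√n)). -/

import Mathlib

/-- `p` and `q` are adjacent in the Delaunay graph of `P` with respect to
axis-parallel rectangles: the closed rectangle spanned by `p` and `q`
contains no other point of `P`. -/
def RectAdj (P : Finset (ℝ × ℝ)) (p q : ℝ × ℝ) : Prop :=
  p ≠ q ∧ ∀ r ∈ P, r ≠ p → r ≠ q →
    ¬(min p.1 q.1 ≤ r.1 ∧ r.1 ≤ max p.1 q.1 ∧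
      min p.2 q.2 ≤ r.2 ∧ r.2 ≤ max p.2 q.2)

/-- A chain increasing in both coordinates. -/
def Bet (C : Finset (ℝ × ℝ)) : Prop :=
  ∀ a ∈ C, ∀ b ∈ C, ∀ c ∈ C, a.1 ≤ b.1 → b.1 ≤ c.1 →
    min a.2 c.2 ≤ b.2 ∧ b.2 ≤ max a.2 c.2

lemma card_filter_even (m : ℕ) :
    ((Finset.range m).filter (fun k => Even k)).card = (m+1)/2 := by
  induction m with
  | zero => simp
  | succ m ih => rw [Finset.range_add_one, Finset.filter_insert]; split <;> rename_i h <;>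
      simp [Finset.mem_range.not.mpr (lt_irrefl m), ih] <;> rw [Nat.even_iff] at h <;> omega

def IncC (C : Finset (ℝ × ℝ)) : Prop :=
  ∀ a ∈ C, ∀ b ∈ C, a.1 ≤ b.1 → a.2 ≤ b.2
open scoped Classical in
noncomputable def upLen (P : Finset (ℝ × ℝ)) (p : ℝ × ℝ) : ℕ :=
  (P.powerset.filter (fun C => IncC C ∧ p ∈ C ∧ ∀ a ∈ C, a.1 ≤ p.1)).sup Finset.card

lemma singleton_mem {P : Finset (ℝ × ℝ)} {p : ℝ × ℝ} (hp : p ∈ P) :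
    ∀ [DecidablePred (fun C => IncC C ∧ p ∈ C ∧ ∀ a ∈ C, a.1 ≤ p.1)],
    ({p} : Finset (ℝ × ℝ)) ∈ P.powerset.filter (fun C => IncC C ∧ p ∈ C ∧ ∀ a ∈ C, a.1 ≤ p.1) := by
  intro _
  simp only [Finset.mem_filter, Finset.mem_powerset, Finset.singleton_subset_iff, Finset.mem_singleton]
  refine ⟨hp, fun a ha b hb _ => by simp_all, by simp, fun a ha => by simp_all⟩

lemma upLen_pos {P : Finset (ℝ × ℝ)} {p : ℝ × ℝ} (hp : p ∈ P) : 1 ≤ upLen P p := by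
  classical
  have := Finset.le_sup (f := Finset.card) (singleton_mem hp)
  simpa [upLen] using this

lemma upLen_achieved {P : Finset (ℝ × ℝ)} {p : ℝ × ℝ} (hp : p ∈ P) :
    ∃ C ⊆ P, IncC C ∧ p ∈ C ∧ (∀ a ∈ C, a.1 ≤ p.1) ∧ C.card = upLen P p := by
  classical
  have hne : (P.powerset.filter (fun C => IncC C ∧ p ∈ C ∧ ∀ a ∈ C, a.1 ≤ p.1)).Nonempty :=
    ⟨{p}, singleton_mem hp⟩
  obtain ⟨C, hC, heq⟩ := Finset.exists_mem_eq_sup _ hne Finset.card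
  simp only [Finset.mem_filter, Finset.mem_powerset] at hC
  exact ⟨C, hC.1, hC.2.1, hC.2.2.1, hC.2.2.2, by rw [upLen]; convert heq.symm⟩

lemma upLen_lt {P : Finset (ℝ × ℝ)} {p q : ℝ × ℝ} (hp : p ∈ P) (hq : q ∈ P)
    (h1 : p.1 < q.1) (h2 : p.2 < q.2) : upLen P p < upLen P q := by
  classical
  obtain ⟨C, hCP, hinc, hpC, hle, hcard⟩ := upLen_achieved hp
  have hqC : q ∉ C := fun h => absurd (hle q h) (not_le.mpr h1)
  have hmem : insert q C ∈ P.powerset.filter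
      (fun C => IncC C ∧ q ∈ C ∧ ∀ a ∈ C, a.1 ≤ q.1) := by
    simp only [Finset.mem_filter, Finset.mem_powerset]
    refine ⟨Finset.insert_subset hq hCP, ?_, Finset.mem_insert_self _ _, ?_⟩
    · have key : ∀ a ∈ C, a.2 ≤ q.2 := fun a ha => (hinc a ha p hpC (hle a ha)).trans h2.le
      intro a ha b hb hab
      rcases Finset.mem_insert.mp hb with hb' | hb'
      · subst hb'
        rcases Finset.mem_insert.mp ha with ha' | ha'
        · subst ha'; exact le_refl _
        · exact key a ha'
      · rcases Finset.mem_insert.mp ha with ha' | ha'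
        · subst ha'; exact absurd ((hle b hb').trans_lt h1) (not_lt.mpr hab)
        · exact hinc a ha' b hb' hab
    · intro a ha
      rcases Finset.mem_insert.mp ha with ha' | ha'
      · subst ha'; exact le_refl _
      · exact (hle a ha').trans h1.le
  have := Finset.le_sup (f := Finset.card) hmem
  rw [Finset.card_insert_of_notMem hqC, hcard] at this
  calc upLen P p < upLen P p + 1 := Nat.lt_succ_self _
    _ ≤ upLen P q := by exact this

def refl2 (r : ℝ × ℝ) : ℝ × ℝ := (r.1, -r.2)

noncomputable def downLen (P : Finset (ℝ × ℝ)) (p : ℝ × ℝ) : ℕ :=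
  upLen (P.image refl2) (refl2 p)

lemma refl2_invol : Function.Involutive refl2 := fun p => by simp [refl2]

lemma downLen_pos {P : Finset (ℝ × ℝ)} {p : ℝ × ℝ} (hp : p ∈ P) : 1 ≤ downLen P p :=
  upLen_pos (Finset.mem_image_of_mem _ hp)

lemma downLen_lt {P : Finset (ℝ × ℝ)} {p q : ℝ × ℝ} (hp : p ∈ P) (hq : q ∈ P)
    (h1 : p.1 < q.1) (h2 : q.2 < p.2) : downLen P p < downLen P q :=
  upLen_lt (Finset.mem_image_of_mem _ hp) (Finset.mem_image_of_mem _ hq) h1 (by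
    simpa [refl2] using h2)

lemma card_le_mul {P : Finset (ℝ × ℝ)}
    (hx : ∀ p ∈ P, ∀ q ∈ P, p.1 = q.1 → p = q)
    (hy : ∀ p ∈ P, ∀ q ∈ P, p.2 = q.2 → p = q) :
    P.card ≤ (P.sup (upLen P)) * (P.sup (downLen P)) := by
  classical
  set F := P.sup (upLen P)
  set G := P.sup (downLen P)
  have key : ∀ p ∈ P, ∀ q ∈ P, p.1 < q.1 → (upLen P p, downLen P p) ≠ (upLen P q, downLen P q) := by
    intro p hp q hq h1
    have hne : p ≠ q := fun h => by simp [h] at h1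
    rcases lt_or_gt_of_ne (fun h => hne (hy p hp q hq h)) with h2 | h2
    · exact fun h => absurd (congrArg Prod.fst h) (upLen_lt hp hq h1 h2).ne
    · exact fun h => absurd (congrArg Prod.snd h) (downLen_lt hp hq h1 h2).ne
  have : P.card ≤ ((Finset.Icc 1 F) ×ˢ (Finset.Icc 1 G)).card := by
    apply Finset.card_le_card_of_injOn (fun p => (upLen P p, downLen P p))
    · intro p hp
      simp only [Finset.mem_coe, Finset.mem_product, Finset.mem_Icc]
      exact ⟨⟨upLen_pos hp, Finset.le_sup hp⟩, ⟨downLen_pos hp, Finset.le_sup hp⟩⟩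
    · intro p hp q hq h
      by_contra hne
      have h1 : p.1 ≠ q.1 := fun he => hne (hx p hp q hq he)
      rcases lt_or_gt_of_ne h1 with h1 | h1
      · exact key p hp q hq h1 h
      · exact key q hq p hp h1 h.symm
  simpa [Nat.card_Icc] using this

lemma inc_bet {C : Finset (ℝ × ℝ)} (h : IncC C) : Bet C := by
  intro a ha b hb c hc hab hbc
  exact ⟨le_trans (min_le_left _ _) (h a ha b hb hab), le_trans (h b hb c hc hbc) (le_max_right _ _)⟩

lemma exists_chain {P : Finset (ℝ × ℝ)}
    (hx : ∀ p ∈ P, ∀ q ∈ P, p.1 = q.1 → p = q)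
    (hy : ∀ p ∈ P, ∀ q ∈ P, p.2 = q.2 → p = q) :
    ∃ C ⊆ P, Bet C ∧ ⌈Real.sqrt P.card⌉₊ ≤ C.card := by
  classical
  rcases P.eq_empty_or_nonempty with rfl | hne
  · exact ⟨∅, le_refl _, by intro a ha; simp at ha, by simp⟩
  set n := P.card with hn
  set r := ⌈Real.sqrt n⌉₊ with hr
  set F := P.sup (upLen P) with hF
  set G := P.sup (downLen P) with hG
  have hn1 : 1 ≤ n := Finset.card_pos.mpr hne
  have hr1 : 1 ≤ r := by
    rw [hr]
    have : (0:ℝ) < Real.sqrt n := Real.sqrt_pos.mpr (by exact_mod_cast hn1)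
    exact Nat.one_le_ceil_iff.mpr this
  have hFG : r ≤ F ∨ r ≤ G := by
    by_contra hcon
    push_neg at hcon
    have hF' : F ≤ r - 1 := by omega
    have hG' : G ≤ r - 1 := by omega
    have hle : n ≤ (r-1) * (r-1) := (card_le_mul hx hy).trans (Nat.mul_le_mul hF' hG')
    have hlt : ((r-1 : ℕ) : ℝ) < Real.sqrt n := Nat.lt_ceil.mp (by omega)
    have : ((r-1)*(r-1) : ℕ) < (n:ℝ) := by
      push_cast
      calc ((r-1:ℕ):ℝ) * ((r-1:ℕ):ℝ) < Real.sqrt n * Real.sqrt n := by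
            apply mul_lt_mul' hlt.le hlt (Nat.cast_nonneg _)
            exact lt_of_le_of_lt (Nat.cast_nonneg _) hlt
        _ = n := Real.mul_self_sqrt (Nat.cast_nonneg _)
    have : (r-1)*(r-1) < n := by exact_mod_cast this
    omega
  rcases hFG with h | h
  · obtain ⟨p, hp, hpe⟩ := Finset.exists_mem_eq_sup P hne (upLen P)
    obtain ⟨C, hCP, hinc, -, -, hcard⟩ := upLen_achieved hp
    exact ⟨C, hCP, inc_bet hinc, by rw [hcard, ← hpe]; exact h⟩
  · obtain ⟨p, hp, hpe⟩ := Finset.exists_mem_eq_sup P hne (downLen P)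
    obtain ⟨C', hCP', hinc, -, -, hcard⟩ :=
      upLen_achieved (Finset.mem_image_of_mem refl2 hp)
    refine ⟨C'.image refl2, ?_, ?_, ?_⟩
    · intro a ha
      obtain ⟨b, hb, rfl⟩ := Finset.mem_image.mp ha
      obtain ⟨c, hc, rfl⟩ := Finset.mem_image.mp (hCP' hb)
      rwa [refl2_invol c]
    · intro a ha b hb c hc hab hbc
      have ha' : refl2 a ∈ C' := by
        obtain ⟨u, hu, rfl⟩ := Finset.mem_image.mp ha; rwa [refl2_invol u]
      have hb' : refl2 b ∈ C' := by
        obtain ⟨u, hu, rfl⟩ := Finset.mem_image.mp hb; rwa [refl2_invol u]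
      have hc' : refl2 c ∈ C' := by
        obtain ⟨u, hu, rfl⟩ := Finset.mem_image.mp hc; rwa [refl2_invol u]
      have h1 := hinc _ ha' _ hb' (by simpa [refl2] using hab)
      have h2 := hinc _ hb' _ hc' (by simpa [refl2] using hbc)
      simp only [refl2, neg_le_neg_iff] at h1 h2
      constructor
      · exact le_trans (min_le_right _ _) h2
      · exact le_trans h1 (le_max_left _ _)
    · rw [Finset.card_image_of_injective _ refl2_invol.injective, hcard]
      rw [downLen] at hpe
      rw [← hpe]; exact h

lemma rectAdj_symm {P : Finset (ℝ × ℝ)} {p q : ℝ × ℝ} (h : RectAdj P p q) : RectAdj P q p := by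
  refine ⟨h.1.symm, fun r hr h1 h2 hc => h.2 r hr h2 h1 ?_⟩
  rwa [min_comm q.1, max_comm q.1, min_comm q.2, max_comm q.2] at hc

lemma alt_indep {P C : Finset (ℝ × ℝ)} (hCP : C ⊆ P)
    (hx : ∀ p ∈ P, ∀ q ∈ P, p.1 = q.1 → p = q) (hB : Bet C) :
    ∃ S ⊆ C, (∀ p ∈ S, ∀ q ∈ S, p ≠ q → ¬ RectAdj P p q) ∧ (C.card + 1)/2 ≤ S.card := by
  classical
  set X : Finset ℝ := C.image Prod.fst with hX
  set xs : List ℝ := X.sort (· ≤ ·) with hxs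
  have hnodup : xs.Nodup := X.sort_nodup _
  have hsorted : xs.SortedLT := X.sortedLT_sort
  have hlen : xs.length = X.card := Finset.length_sort _
  have hinjC : Set.InjOn Prod.fst (C : Set (ℝ × ℝ)) :=
    fun a ha b hb h => hx a (hCP ha) b (hCP hb) h
  have hXcard : X.card = C.card := Finset.card_image_of_injOn hinjC
  set S : Finset (ℝ × ℝ) := C.filter (fun p => Even (xs.idxOf p.1)) with hS
  have hSC : S ⊆ C := Finset.filter_subset _ _
  -- membership facts
  have hmem : ∀ p ∈ C, p.1 ∈ xs := fun p hp =>
    (Finset.mem_sort _).mpr (Finset.mem_image_of_mem _ hp)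
  have hidx : ∀ p ∈ C, xs.idxOf p.1 < xs.length := fun p hp =>
    List.idxOf_lt_length_iff.mpr (hmem p hp)
  have hget : ∀ p (hp : p ∈ C), xs.get ⟨xs.idxOf p.1, hidx p hp⟩ = p.1 :=
    fun p hp => List.idxOf_get _
  -- the cardinality computation
  have hcard : S.card = (C.card + 1)/2 := by
    have h1 : S.card = (X.filter (fun x => Even (xs.idxOf x))).card := by
      rw [Finset.filter_image]
      exact (Finset.card_image_of_injOn (hinjC.mono (by exact_mod_cast hSC))).symm
    rw [h1, ← card_filter_even C.card]
    apply Finset.card_bij (fun x _ => xs.idxOf x)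
    · intro x hxm
      simp only [Finset.mem_filter, Finset.mem_range] at hxm ⊢
      have hx' : x ∈ xs := (Finset.mem_sort _).mpr hxm.1
      exact ⟨(List.idxOf_lt_length_iff.mpr hx').trans_le (by rw [hlen, hXcard]), hxm.2⟩
    · intro a ha b hb h
      have ha' : a ∈ xs := (Finset.mem_sort _).mpr (Finset.mem_filter.mp ha).1
      have hb' : b ∈ xs := (Finset.mem_sort _).mpr (Finset.mem_filter.mp hb).1
      have h2 : xs.get ⟨List.idxOf a xs, List.idxOf_lt_length_iff.mpr ha'⟩ =
          xs.get ⟨List.idxOf b xs, List.idxOf_lt_length_iff.mpr hb'⟩ := by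
        congr 1
        exact Fin.ext h
      rwa [List.idxOf_get, List.idxOf_get] at h2
    · intro k hk
      simp only [Finset.mem_filter, Finset.mem_range] at hk
      have hk' : k < xs.length := by rw [hlen, hXcard]; exact hk.1
      refine ⟨xs.get ⟨k, hk'⟩, Finset.mem_filter.mpr ⟨?_, ?_⟩, ?_⟩
      · exact (Finset.mem_sort _).mp (xs.get_mem _)
      · rw [List.get_idxOf hnodup]; exact hk.2
      · rw [List.get_idxOf hnodup]
  refine ⟨S, hSC, ?_, hcard.ge⟩
  -- independence
  have key : ∀ p ∈ S, ∀ q ∈ S, p.1 < q.1 → ¬ RectAdj P p q := by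
    intro p hp q hq hpq hadj
    obtain ⟨hpC, hpE⟩ := Finset.mem_filter.mp hp
    obtain ⟨hqC, hqE⟩ := Finset.mem_filter.mp hq
    set i := xs.idxOf p.1 with hi
    set j := xs.idxOf q.1 with hj
    have hilt := hidx p hpC
    have hjlt := hidx q hqC
    have hmono := hsorted.strictMono_get
    have hij : i < j := by
      by_contra hcon
      push_neg at hcon
      rcases eq_or_lt_of_le hcon with he | hlt
      · have : p.1 = q.1 := by
          rw [← hget p hpC, ← hget q hqC]; congr 1; exact Fin.ext he.symm
        exact absurd this hpq.ne
      · have := hmono (a := ⟨j, hjlt⟩) (b := ⟨i, hilt⟩) hlt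
        rw [hget p hpC, hget q hqC] at this
        exact absurd this (not_lt.mpr hpq.le)
    have hij2 : i + 1 < j := by
      rw [Nat.even_iff] at hpE hqE
      omega
    have hi1 : i + 1 < xs.length := hij2.trans hjlt
    set x := xs.get ⟨i+1, hi1⟩ with hxdef
    have hx1 : p.1 < x := by
      have := hmono (a := ⟨i, hilt⟩) (b := ⟨i+1, hi1⟩) (by simp)
      rwa [hget p hpC] at this
    have hx2 : x < q.1 := by
      have := hmono (a := ⟨i+1, hi1⟩) (b := ⟨j, hjlt⟩) (by simp [hij2])
      rwa [hget q hqC] at this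
    have hxX : x ∈ X := (Finset.mem_sort _).mp (xs.get_mem _)
    obtain ⟨r, hrC, hrx⟩ := Finset.mem_image.mp hxX
    have hbet := hB p hpC r hrC q hqC (by rw [hrx]; exact hx1.le) (by rw [hrx]; exact hx2.le)
    refine hadj.2 r (hCP hrC) (fun h => ?_) (fun h => ?_) ?_
    · rw [h] at hrx; exact hx1.ne hrx
    · rw [h] at hrx; exact hx2.ne' hrx
    · refine ⟨?_, ?_, hbet.1, hbet.2⟩
      · rw [min_eq_left hpq.le, hrx]; exact hx1.le
      · rw [max_eq_right hpq.le, hrx]; exact hx2.le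
  intro p hp q hq hne hadj
  have hpq : p.1 ≠ q.1 := fun h => hne (hx p (hCP (hSC hp)) q (hCP (hSC hq)) h)
  rcases lt_or_gt_of_ne hpq with h | h
  · exact key p hp q hq h hadj
  · exact key q hq p hp h (rectAdj_symm hadj)

theorem rect_delaunay_independent_set (P : Finset (ℝ × ℝ))
    (hx : ∀ p ∈ P, ∀ q ∈ P, p.1 = q.1 → p = q)
    (hy : ∀ p ∈ P, ∀ q ∈ P, p.2 = q.2 → p = q) :
    ∃ S ⊆ P, (∀ p ∈ S, ∀ q ∈ S, p ≠ q → ¬ RectAdj P p q) ∧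
      ⌈Real.sqrt P.card / 2⌉₊ ≤ S.card := by
  obtain ⟨C, hCP, hB, hC⟩ := exists_chain hx hy
  obtain ⟨S, hSC, hind, hcard⟩ := alt_indep hCP hx hB
  refine ⟨S, hSC.trans hCP, hind, le_trans ?_ hcard⟩
  rw [Nat.ceil_le]
  have h1 : Real.sqrt P.card ≤ (⌈Real.sqrt P.card⌉₊ : ℝ) := Nat.le_ceil _
  have h2 : (⌈Real.sqrt P.card⌉₊ : ℝ) ≤ (C.card : ℝ) := by exact_mod_cast hC
  have h3 : (C.card : ℝ) ≤ 2 * (((C.card + 1)/2 : ℕ) : ℝ) := by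
    have : C.card ≤ 2 * ((C.card + 1)/2) := by omega
    exact_mod_cast this
  linarith
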